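/- Let m, n be positive integers with m ≥ 2, let G = C_m ⊕ C_{mn}, let {e_1, e_2} be a basis of G with ord(e_1) = m and ord(e_2) = mn, let x be an integer with gcd(x, m) = 1, let s, t ∈ [1, n], and let g ∈ G. Then the sequence S = g^{tm−1} · (e_1 + g)^{(n+1−t)m−1} · (e_2 + g)^{sm−1} · (−x·e_1 + e_2 + g)^{(n+1−s)m−1} has length 2m + 2mn − 4 (which equals s(G) − 1) and has no zero-sum subsequence of length mn = exp(G). -/

import Mathlib

private lemma multiset_decomp {α : Type*} [DecidableEq α] {T A B : Multiset α}
    (h : T ≤ A + B) : ∃ T1 T2, T1 ≤ A ∧ T2 ≤ B ∧ T = T1 + T2 := by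
  refine ⟨T ∩ A, T - A, Multiset.inter_le_right, ?_, ?_⟩
  · rw [Multiset.sub_le_iff_le_add]
    rwa [add_comm] at h
  · ext a
    simp only [Multiset.count_add, Multiset.count_inter, Multiset.count_sub]
    omega

/-- The sequence `g^{tm-1} (e₁+g)^{(n+1-t)m-1} (e₂+g)^{sm-1}
(-x e₁ + e₂ + g)^{(n+1-s)m-1}` over `C_m ⊕ C_{mn}` has length `2m + 2mn - 4 = s(G) - 1`
and no zero-sum subsequence of length `mn = exp(G)`. -/
theorem stmt_3 (m n : ℕ) (hm : 2 ≤ m) (hn : 0 < n)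
    (e1 e2 : ZMod m × ZMod (m * n))
    (he1 : addOrderOf e1 = m) (he2 : addOrderOf e2 = m * n)
    (hind : ∀ a b : ℤ, a • e1 + b • e2 = 0 → a • e1 = 0 ∧ b • e2 = 0)
    (hgen : AddSubgroup.closure ({e1, e2} : Set (ZMod m × ZMod (m * n))) = ⊤)
    (x : ℤ) (hx : Int.gcd x m = 1)
    (s t : ℕ) (hs1 : 1 ≤ s) (hsn : s ≤ n) (ht1 : 1 ≤ t) (htn : t ≤ n)
    (g : ZMod m × ZMod (m * n)) :
    (Multiset.replicate (t * m - 1) g +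
        Multiset.replicate ((n + 1 - t) * m - 1) (e1 + g) +
        Multiset.replicate (s * m - 1) (e2 + g) +
        Multiset.replicate ((n + 1 - s) * m - 1) ((-x) • e1 + e2 + g)).card
      = 2 * m + 2 * (m * n) - 4 ∧
    ¬ ∃ T ≤ Multiset.replicate (t * m - 1) g +
        Multiset.replicate ((n + 1 - t) * m - 1) (e1 + g) +
        Multiset.replicate (s * m - 1) (e2 + g) +
        Multiset.replicate ((n + 1 - s) * m - 1) ((-x) • e1 + e2 + g),
        T.sum = 0 ∧ Multiset.card T = m * n := by
  -- basic product facts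
  have h1 : t * m + (n + 1 - t) * m = m * n + m := by
    rw [← Nat.add_mul]
    have : t + (n + 1 - t) = n + 1 := by omega
    rw [this]; ring
  have h2 : s * m + (n + 1 - s) * m = m * n + m := by
    rw [← Nat.add_mul]
    have : s + (n + 1 - s) = n + 1 := by omega
    rw [this]; ring
  have htm : m ≤ t * m := Nat.le_mul_of_pos_left m ht1
  have htm' : m ≤ (n + 1 - t) * m := Nat.le_mul_of_pos_left m (by omega)
  have hsm : m ≤ s * m := Nat.le_mul_of_pos_left m hs1
  have hsm' : m ≤ (n + 1 - s) * m := Nat.le_mul_of_pos_left m (by omega)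
  constructor
  · simp only [Multiset.card_add, Multiset.card_replicate]
    omega
  · rintro ⟨T, hT, hsum, hcard⟩
    -- decompose T
    obtain ⟨T', T4, hT', hT4, rfl⟩ := multiset_decomp hT
    obtain ⟨T'', T3, hT'', hT3, rfl⟩ := multiset_decomp hT'
    obtain ⟨T1, T2, hT1, hT2, rfl⟩ := multiset_decomp hT''
    obtain ⟨a, ha, rfl⟩ := Multiset.le_replicate_iff.1 hT1
    obtain ⟨b, hb, rfl⟩ := Multiset.le_replicate_iff.1 hT2
    obtain ⟨c, hc, rfl⟩ := Multiset.le_replicate_iff.1 hT3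
    obtain ⟨d, hd, rfl⟩ := Multiset.le_replicate_iff.1 hT4
    simp only [Multiset.card_add, Multiset.card_replicate] at hcard
    simp only [Multiset.sum_add, Multiset.sum_replicate] at hsum
    -- mn • g = 0 for every element
    have hmn0 : ∀ y : ZMod m × ZMod (m * n), (m * n) • y = 0 := by
      intro y
      ext
      · show (m * n) • y.1 = 0
        rw [nsmul_eq_mul]
        push_cast
        simp [ZMod.natCast_self]
      · show (m * n) • y.2 = 0
        rw [nsmul_eq_mul]
        simp [ZMod.natCast_self]
    -- rewrite the sum
    have key : ((b : ℤ) - d * x) • e1 + ((c : ℤ) + d) • e2 = 0 := by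
      have expand : a • g + b • (e1 + g) + c • (e2 + g) + d • ((-x) • e1 + e2 + g)
          = ((b : ℤ) - d * x) • e1 + ((c : ℤ) + d) • e2 + ((a + b + c + d : ℕ)) • g := by
        simp only [← natCast_zsmul]
        push_cast
        module
      rw [expand, hcard, hmn0, add_zero] at hsum
      exact hsum
    obtain ⟨hz1, hz2⟩ := hind _ _ key
    have hdvd1 : (m : ℤ) ∣ (b : ℤ) - d * x := by
      rw [← he1]; exact addOrderOf_dvd_iff_zsmul_eq_zero.2 hz1
    have hdvd2 : ((m * n : ℕ) : ℤ) ∣ (c : ℤ) + d := by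
      rw [← he2]
      push_cast
      exact_mod_cast addOrderOf_dvd_iff_zsmul_eq_zero.2 hz2
    have hdvd2' : (m * n) ∣ c + d := by
      have : ((m * n : ℕ) : ℤ) ∣ ((c + d : ℕ) : ℤ) := by push_cast; push_cast at hdvd2; exact hdvd2
      exact_mod_cast this
    -- c + d = 0 or c + d = m * n
    obtain ⟨k, hk⟩ := hdvd2'
    have hk2 : k < 2 := by
      by_contra hk2
      push_neg at hk2
      have : m * n * 2 ≤ m * n * k := Nat.mul_le_mul_left _ hk2
      have hmn2 : 2 ≤ m * n := by nlinarith
      omega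
    interval_cases k
    · -- c + d = 0
      simp only [Nat.mul_zero] at hk
      have hc0 : c = 0 := by omega
      have hd0 : d = 0 := by omega
      subst hc0 hd0
      have hmb : (m : ℤ) ∣ (b : ℤ) := by simpa using hdvd1
      have hmb' : m ∣ b := by exact_mod_cast hmb
      obtain ⟨k', hk'⟩ := hmb'
      -- b < (n+1-t)*m and m ∣ b gives b ≤ (n-t)*m, so a ≥ t*m; contradiction
      have hblt : m * k' < (n + 1 - t) * m := by omega
      have hkt : k' < n + 1 - t := by
        by_contra hkt
        push_neg at hkt
        have : (n + 1 - t) * m ≤ m * k' := by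
          calc (n + 1 - t) * m = m * (n + 1 - t) := Nat.mul_comm _ _
            _ ≤ m * k' := Nat.mul_le_mul_left _ hkt
        omega
      have : m * k' ≤ m * (n - t) := Nat.mul_le_mul_left _ (by omega)
      have hmnt : m * (n - t) + t * m = m * n := by
        rw [Nat.mul_comm t m, ← Nat.mul_add]
        congr 1
        omega
      omega
    · -- c + d = m * n
      simp only [Nat.mul_one] at hk
      have ha0 : a = 0 := by omega
      have hb0 : b = 0 := by omega
      subst ha0 hb0
      have hmd : (m : ℤ) ∣ (d : ℤ) * x := by
        have : (m : ℤ) ∣ -((d : ℤ) * x) := by simpa using hdvd1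
        exact (dvd_neg.mp this)
      have hcop : IsCoprime (m : ℤ) x := by
        rw [Int.isCoprime_iff_gcd_eq_one, Int.gcd_comm]
        exact hx
      have hmd' : (m : ℤ) ∣ (d : ℤ) := hcop.dvd_of_dvd_mul_right hmd
      have hmdn : m ∣ d := by exact_mod_cast hmd'
      obtain ⟨k', hk'⟩ := hmdn
      have hdlt : m * k' < (n + 1 - s) * m := by omega
      have hks : k' < n + 1 - s := by
        by_contra hks
        push_neg at hks
        have : (n + 1 - s) * m ≤ m * k' := by
          calc (n + 1 - s) * m = m * (n + 1 - s) := Nat.mul_comm _ _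
            _ ≤ m * k' := Nat.mul_le_mul_left _ hks
        omega
      have : m * k' ≤ m * (n - s) := Nat.mul_le_mul_left _ (by omega)
      have hmns : m * (n - s) + s * m = m * n := by
        rw [Nat.mul_comm s m, ← Nat.mul_add]
        congr 1
        omega
      omega
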